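/- (Final Lemma, Jacobian obstruction) Let U ⊆ ℂ be open, let μ, a : U → ℂ, and let x, y : U → ℝ be real-differentiable functions satisfying x_w = 2μa and y_w = μ(1 + a²) on U (Wirtinger derivatives in w = u + iv). Then at every w ∈ U the Jacobian of the coordinate transformation satisfies x_u y_v − x_v y_u = 8|μ(w)|²(1 − |a(w)|²)·Im(a(w)). In particular, if μ(w) ≠ 0 and |a(w)| ≠ 1, then the Jacobian is nonzero at w if and only if Im(a(w)) ≠ 0; hence Im(a) ≠ 0 on U is a necessary condition for w ↦ (x(w), y(w)) to be a valid coordinate transformation realizing the isothermal representation f_w = μ(2a, 1+a², i(1−a²), 0) of a graph surface (x, y, A(x,y), 0) in ℝ³₁. -/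

import Mathlib

open Complex

/-- The Wirtinger derivative `g_w = (1/2)(g_u − i g_v)` of a real-valued map
`g : ℂ → ℝ`, viewed as a complex number. -/
noncomputable def wdR (g : ℂ → ℝ) (w : ℂ) : ℂ :=
  (1 / 2 : ℂ) * ((fderiv ℝ g w 1 : ℝ) - Complex.I * (fderiv ℝ g w Complex.I : ℝ))

lemma wdR_re (g : ℂ → ℝ) (w : ℂ) : (wdR g w).re = (1/2) * fderiv ℝ g w 1 := by
  simp [wdR]

lemma wdR_im (g : ℂ → ℝ) (w : ℂ) : (wdR g w).im = -(1/2) * fderiv ℝ g w Complex.I := by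
  simp [wdR]

/-- Final Lemma, Jacobian obstruction: if real-differentiable
`x, y : U → ℝ` satisfy the Wirtinger equations `x_w = 2μa` and `y_w = μ(1+a²)` on `U`,
then the Jacobian satisfies `x_u y_v − x_v y_u = 8|μ|²(1−|a|²)·Im(a)` at every `w ∈ U`;
in particular, where `μ ≠ 0` and `|a| ≠ 1`, the Jacobian is nonzero iff `Im(a) ≠ 0`. -/
theorem stmt_19 (U : Set ℂ) (hU : IsOpen U) (μ a : ℂ → ℂ) (x y : ℂ → ℝ)
    (hx : ∀ w ∈ U, DifferentiableAt ℝ x w) (hy : ∀ w ∈ U, DifferentiableAt ℝ y w)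
    (hxw : ∀ w ∈ U, wdR x w = 2 * μ w * a w)
    (hyw : ∀ w ∈ U, wdR y w = μ w * (1 + (a w) ^ 2)) :
    ∀ w ∈ U,
      fderiv ℝ x w 1 * fderiv ℝ y w Complex.I -
          fderiv ℝ x w Complex.I * fderiv ℝ y w 1 =
        8 * ‖μ w‖ ^ 2 * (1 - ‖a w‖ ^ 2) * (a w).im ∧
      (μ w ≠ 0 → ‖a w‖ ≠ 1 →
        (fderiv ℝ x w 1 * fderiv ℝ y w Complex.I -
            fderiv ℝ x w Complex.I * fderiv ℝ y w 1 ≠ 0 ↔ (a w).im ≠ 0)) := by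
  intro w hw
  have hx1 : fderiv ℝ x w 1 = 2 * (2 * μ w * a w).re := by
    have h := congrArg Complex.re (hxw w hw)
    rw [wdR_re] at h; linarith
  have hxI : fderiv ℝ x w Complex.I = -2 * (2 * μ w * a w).im := by
    have h := congrArg Complex.im (hxw w hw)
    rw [wdR_im] at h; linarith
  have hy1 : fderiv ℝ y w 1 = 2 * (μ w * (1 + (a w) ^ 2)).re := by
    have h := congrArg Complex.re (hyw w hw)
    rw [wdR_re] at h; linarith
  have hyI : fderiv ℝ y w Complex.I = -2 * (μ w * (1 + (a w) ^ 2)).im := by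
    have h := congrArg Complex.im (hyw w hw)
    rw [wdR_im] at h; linarith
  have habsμ : ‖μ w‖ ^ 2 = (μ w).re ^ 2 + (μ w).im ^ 2 := by
    rw [Complex.sq_norm, Complex.normSq_apply]; ring
  have habsa : ‖a w‖ ^ 2 = (a w).re ^ 2 + (a w).im ^ 2 := by
    rw [Complex.sq_norm, Complex.normSq_apply]; ring
  have main : fderiv ℝ x w 1 * fderiv ℝ y w Complex.I -
      fderiv ℝ x w Complex.I * fderiv ℝ y w 1 =
      8 * ‖μ w‖ ^ 2 * (1 - ‖a w‖ ^ 2) * (a w).im := by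
    rw [hx1, hxI, hy1, hyI, habsμ, habsa]
    simp [Complex.mul_re, Complex.mul_im, Complex.add_re, Complex.add_im, pow_two]
    ring
  refine ⟨main, fun hμ ha => ?_⟩
  rw [main]
  have hμ2 : ‖μ w‖ ^ 2 ≠ 0 := by
    simpa using hμ
  have ha2 : (1 : ℝ) - ‖a w‖ ^ 2 ≠ 0 := by
    have h0 : 0 ≤ ‖a w‖ := norm_nonneg _
    intro h
    apply ha
    nlinarith
  constructor
  · intro h him
    apply h
    rw [him]; ring
  · intro him
    exact mul_ne_zero (mul_ne_zero (mul_ne_zero (by norm_num) hμ2) ha2) him
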